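/- arXiv:2602.22167 — 5 statements merged into one kernel-verified Lean document; each statement's English description precedes it below -/
import Mathlib

section
/- Let n ≥ 2 and 1 ≤ H_i ≤ p. Then the multiplicative energy of the box B satisfies E(B) ≤ 3·|B|² + Σ_{z ∈ Z} f_0(z)², where B_0 is the symmetric box, Z = (B_0∖{0})/(B_0∖{0}), and f_0(z) = #{(x,y) ∈ B_0² : xz = y}. -/
open scoped Classical

/-- The box `B = {∑ xᵢωᵢ : Nᵢ+1 ≤ xᵢ ≤ Nᵢ+Hᵢ}` as a subset of the field. -/
def boxSet {n : ℕ} {F : Type} [Field F] (ω : Fin n → F) (N : Fin n → ℤ)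
    (H : Fin n → ℕ) : Set F :=
  {x | ∃ c : Fin n → ℤ, (∀ i, N i + 1 ≤ c i ∧ c i ≤ N i + H i) ∧
    x = ∑ i, (c i : F) * ω i}

/-- The symmetric box `B₀ = {∑ xᵢωᵢ : |xᵢ| ≤ Hᵢ}` as a subset of the field. -/
def symBoxSet {n : ℕ} {F : Type} [Field F] (ω : Fin n → F) (H : Fin n → ℕ) : Set F :=
  {x | ∃ c : Fin n → ℤ, (∀ i, |c i| ≤ (H i : ℤ)) ∧ x = ∑ i, (c i : F) * ω i}

/-- The ratio set `Z = (B₀∖{0})/(B₀∖{0})`. -/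
def ratioSet {n : ℕ} {F : Type} [Field F] (ω : Fin n → F) (H : Fin n → ℕ) : Set F :=
  {z | ∃ x y : F, x ∈ symBoxSet ω H ∧ y ∈ symBoxSet ω H ∧ x ≠ 0 ∧ y ≠ 0 ∧ x * z = y}

/-- `f₀(z) = #{(x,y) ∈ B₀² : xz = y}`. -/
noncomputable def f0 {n : ℕ} {F : Type} [Field F] (ω : Fin n → F) (H : Fin n → ℕ)
    (z : F) : ℕ :=
  Set.ncard {q : F × F | q.1 ∈ symBoxSet ω H ∧ q.2 ∈ symBoxSet ω H ∧ q.1 * z = q.2}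

/-- The multiplicative energy `E(A) = #{(a,b,c,d) ∈ A⁴ : ab = cd}`. -/
noncomputable def mulEnergySet {F : Type} [Field F] (A : Set F) : ℕ :=
  Set.ncard {q : F × F × F × F |
    q.1 ∈ A ∧ q.2.1 ∈ A ∧ q.2.2.1 ∈ A ∧ q.2.2.2 ∈ A ∧ q.1 * q.2.1 = q.2.2.1 * q.2.2.2}

section Aux
variable {n : ℕ} {F : Type} [Field F]

lemma zero_mem_symBox (ω : Fin n → F) (H : Fin n → ℕ) : (0:F) ∈ symBoxSet ω H :=
  ⟨0, fun i => by simp, by simp⟩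

lemma diff_mem_symBox (ω : Fin n → F) {N : Fin n → ℤ} {H : Fin n → ℕ}
    {a b : F} (ha : a ∈ boxSet ω N H) (hb : b ∈ boxSet ω N H) :
    a - b ∈ symBoxSet ω H := by
  obtain ⟨c, hc, rfl⟩ := ha
  obtain ⟨d, hd, rfl⟩ := hb
  refine ⟨fun i => c i - d i, fun i => ?_, ?_⟩
  · have h1 := hc i; have h2 := hd i
    rw [abs_le]; dsimp only; omega
  · rw [← Finset.sum_sub_distrib]
    apply Finset.sum_congr rfl
    intro i _
    push_cast
    ring
end Aux

/-- `E(B) ≤ 3|B|² + ∑_{z∈Z} f₀(z)²`. -/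
theorem stmt_13 (n : ℕ) (hn : 2 ≤ n) (p : ℕ) (hp : p.Prime)
    (F : Type) [Field F] [Fintype F] (hF : Fintype.card F = p ^ n)
    (ω : Fin n → F)
    (hω : Function.Bijective (fun c : Fin n → ZMod p => ∑ i, ((c i).val : F) * ω i))
    (N : Fin n → ℤ) (H : Fin n → ℕ) (hH1 : ∀ i, 1 ≤ H i) (hHp : ∀ i, H i ≤ p) :
    mulEnergySet (boxSet ω N H) ≤
      3 * (∏ i, H i) ^ 2 +
        ∑ z ∈ Finset.univ.filter (fun z : F => z ∈ ratioSet ω H), (f0 ω H z) ^ 2 := by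
  classical
  set Zf : Finset F := Finset.univ.filter (fun z : F => z ∈ ratioSet ω H) with hZdef
  set B : Finset F := Finset.univ.filter (· ∈ boxSet ω N H) with hBdef
  set B0 : Finset F := Finset.univ.filter (· ∈ symBoxSet ω H) with hB0def
  have hmemB : ∀ x : F, x ∈ B ↔ x ∈ boxSet ω N H := fun x => by simp [hBdef]
  have hmemB0 : ∀ x : F, x ∈ B0 ↔ x ∈ symBoxSet ω H := fun x => by simp [hB0def]
  set hset : F → Finset (F × F) :=
    fun z => (B ×ˢ B).filter (fun q => q.1 ≠ 0 ∧ q.1 * z = q.2) with hsetdef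
  set h : F → ℕ := fun z => (hset z).card with hdef
  set f0set : F → Finset (F × F) :=
    fun z => (B0 ×ˢ B0).filter (fun q => q.1 * z = q.2) with f0setdef
  -- f0 as a finset card
  have hf0 : ∀ z : F, f0 ω H z = (f0set z).card := by
    intro z
    have hfin : ({q : F × F | q.1 ∈ symBoxSet ω H ∧ q.2 ∈ symBoxSet ω H ∧
        q.1 * z = q.2}).Finite := Set.toFinite _
    unfold f0
    rw [Set.ncard_eq_toFinset_card _ hfin]
    congr 1
    ext q
    simp only [Set.Finite.mem_toFinset, Set.mem_setOf_eq, f0setdef, Finset.mem_filter,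
      Finset.mem_product, hmemB0]
    tauto
  -- energy as a finset card
  set Q : Finset (F × F × F × F) := Finset.univ.filter (fun q : F × F × F × F =>
      q.1 ∈ B ∧ q.2.1 ∈ B ∧ q.2.2.1 ∈ B ∧ q.2.2.2 ∈ B ∧
        q.1 * q.2.1 = q.2.2.1 * q.2.2.2) with hQdef
  have hE : mulEnergySet (boxSet ω N H) = Q.card := by
    have hfin : ({q : F × F × F × F | q.1 ∈ boxSet ω N H ∧ q.2.1 ∈ boxSet ω N H ∧
        q.2.2.1 ∈ boxSet ω N H ∧ q.2.2.2 ∈ boxSet ω N H ∧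
        q.1 * q.2.1 = q.2.2.1 * q.2.2.2}).Finite := Set.toFinite _
    unfold mulEnergySet
    rw [Set.ncard_eq_toFinset_card _ hfin]
    congr 1
    ext q
    simp only [Set.Finite.mem_toFinset, Set.mem_setOf_eq, hQdef, Finset.mem_filter,
      Finset.mem_univ, true_and, hmemB]
  set Q1 := Q.filter (fun q => q.1 ≠ 0 ∧ q.2.2.2 ≠ 0) with hQ1def
  set Q2 := Q.filter (fun q => q.1 = 0) with hQ2def
  set Q3 := Q.filter (fun q => q.1 ≠ 0 ∧ q.2.2.2 = 0) with hQ3def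
  have hsplit : Q.card ≤ Q1.card + Q2.card + Q3.card := by
    have hsub : Q ⊆ Q1 ∪ Q2 ∪ Q3 := by
      intro q hq
      simp only [hQ1def, hQ2def, hQ3def, Finset.mem_union, Finset.mem_filter]
      by_cases h1 : q.1 = 0
      · tauto
      · by_cases h2 : q.2.2.2 = 0 <;> tauto
    calc Q.card ≤ (Q1 ∪ Q2 ∪ Q3).card := Finset.card_le_card hsub
      _ ≤ (Q1 ∪ Q2).card + Q3.card := Finset.card_union_le _ _
      _ ≤ Q1.card + Q2.card + Q3.card :=
          Nat.add_le_add_right (Finset.card_union_le _ _) _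
  -- fiber decomposition of Q1
  have hQ1card : Q1.card = ∑ z : F, h z * h z := by
    rw [Finset.card_eq_sum_card_fiberwise
      (f := fun q : F × F × F × F => q.2.2.1 * q.1⁻¹) (t := Finset.univ)
      (fun x _ => Finset.mem_univ _)]
    refine Finset.sum_congr rfl fun z _ => ?_
    rw [hdef]
    rw [← Finset.card_product]
    apply Finset.card_bij (fun (q : F × F × F × F) _ => ((q.1, q.2.2.1), (q.2.2.2, q.2.1)))
    · intro q hq
      simp only [hQ1def, hQdef, Finset.mem_filter, Finset.mem_univ, true_and] at hq
      obtain ⟨⟨⟨ha, hb, hc, hd, habcd⟩, ha0, hd0⟩, hz⟩ := hq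
      simp only [hsetdef, Finset.mem_product, Finset.mem_filter]
      have hc1 : q.1 * z = q.2.2.1 := by
        rw [← hz]; field_simp
      refine ⟨⟨⟨ha, hc⟩, ha0, hc1⟩, ⟨hd, hb⟩, hd0, ?_⟩
      rw [← hz]
      field_simp
      linear_combination -habcd
    · intro q1 h1 q2 h2 he
      simp only [Prod.mk.injEq] at he
      obtain ⟨⟨e1, e2⟩, e3, e4⟩ := he
      exact Prod.ext e1 (Prod.ext e4 (Prod.ext e2 e3))
    · rintro ⟨⟨a, c⟩, d, b⟩ hmem
      simp only [Finset.mem_product, hsetdef, Finset.mem_filter] at hmem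
      obtain ⟨⟨⟨ha, hc⟩, ha0, hac⟩, ⟨⟨hd, hb⟩, hd0, hdb⟩⟩ := hmem
      refine ⟨(a, b, c, d), ?_, rfl⟩
      simp only [hQ1def, hQdef, Finset.mem_filter, Finset.mem_univ, true_and]
      refine ⟨⟨⟨ha, hb, hc, hd, ?_⟩, ha0, hd0⟩, ?_⟩
      · rw [← hac, ← hdb]; ring
      · rw [← hac]; field_simp
  set offz : Finset F := Finset.univ \ {0} with hoffz
  -- fibers over nonzero z for pairs of nonzero elements
  have hfiber2 : ∀ z ∈ offz,
      ((B.erase 0 ×ˢ B.erase 0).filter (fun q : F × F => q.2 * q.1⁻¹ = z)) = hset z := by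
    intro z hz
    have hz0 : z ≠ 0 := by simpa [hoffz] using hz
    ext ⟨a, c⟩
    simp only [Finset.mem_filter, Finset.mem_product, Finset.mem_erase, hsetdef]
    constructor
    · rintro ⟨⟨⟨ha0, ha⟩, hc0, hc⟩, hac⟩
      exact ⟨⟨ha, hc⟩, ha0, by rw [← hac]; field_simp⟩
    · rintro ⟨⟨ha, hc⟩, ha0, hac⟩
      have hc0 : c ≠ 0 := by rw [← hac]; exact mul_ne_zero ha0 hz0
      exact ⟨⟨⟨ha0, ha⟩, hc0, hc⟩, by rw [← hac]; field_simp⟩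
  have hsumoff : ∑ z ∈ offz, h z = (B.erase 0).card * (B.erase 0).card := by
    rw [← Finset.card_product]
    rw [Finset.card_eq_sum_card_fiberwise
      (f := fun q : F × F => q.2 * q.1⁻¹) (t := offz) ?_]
    · exact (Finset.sum_congr rfl fun z hz => by rw [hfiber2 z hz, hdef]).symm
    · rintro ⟨a, c⟩ hq
      simp only [Finset.mem_coe, Finset.mem_product, Finset.mem_erase] at hq
      simp only [Finset.mem_coe, hoffz, Finset.mem_sdiff, Finset.mem_univ, Finset.mem_singleton, true_and]
      exact mul_ne_zero hq.2.1 (inv_ne_zero hq.1.1)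
  -- h z ≤ f0 via difference injection
  have hle1 : ∀ z : F, 1 ≤ h z → h z ≤ (f0set z).card := by
    intro z hz
    rw [hdef] at hz ⊢
    obtain ⟨q1, hq1⟩ := Finset.card_pos.mp hz
    apply Finset.card_le_card_of_injOn (fun q => (q.1 - q1.1, q.2 - q1.2))
    · intro q hq
      simp only [hsetdef, Finset.mem_coe, Finset.mem_filter, Finset.mem_product,
        hmemB] at hq hq1
      simp only [Finset.mem_coe, f0setdef, Finset.mem_filter, Finset.mem_product, hmemB0]
      refine ⟨⟨diff_mem_symBox ω hq.1.1 hq1.1.1, diff_mem_symBox ω hq.1.2 hq1.1.2⟩, ?_⟩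
      rw [sub_mul, hq.2.2, hq1.2.2]
    · intro q hq q' hq' he
      simp only [Prod.mk.injEq] at he
      exact Prod.ext (sub_left_inj.mp he.1) (sub_left_inj.mp he.2)
  -- membership in Z from two solutions
  have hZmem : ∀ z : F, z ≠ 0 → 2 ≤ h z → z ∈ Zf := by
    intro z hz0 hz
    rw [hdef] at hz
    obtain ⟨q, hq, q', hq', hne⟩ := Finset.one_lt_card.mp hz
    simp only [hsetdef, Finset.mem_filter, Finset.mem_product, hmemB] at hq hq'
    have hane : q.1 ≠ q'.1 := by
      intro he
      apply hne
      have h2 : q.2 = q'.2 := by rw [← hq.2.2, ← hq'.2.2, he]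
      exact Prod.ext he h2
    simp only [hZdef, Finset.mem_filter, Finset.mem_univ, true_and]
    refine ⟨q.1 - q'.1, q.2 - q'.2, diff_mem_symBox ω hq.1.1 hq'.1.1,
      diff_mem_symBox ω hq.1.2 hq'.1.2, sub_ne_zero_of_ne hane, ?_, ?_⟩
    · rw [← hq.2.2, ← hq'.2.2, ← sub_mul]
      exact mul_ne_zero (sub_ne_zero_of_ne hane) hz0
    · rw [sub_mul, hq.2.2, hq'.2.2]
  -- |B| ≤ ∏ H i
  have hBcard : B.card ≤ ∏ i, H i := by
    have hsub : B ⊆ Finset.image (fun c : Fin n → ℤ => ∑ i, (c i : F) * ω i)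
        (Fintype.piFinset fun i => Finset.Icc (N i + 1) (N i + (H i : ℤ))) := by
      intro x hx
      rw [hmemB] at hx
      obtain ⟨c, hc, rfl⟩ := hx
      refine Finset.mem_image.mpr ⟨c, ?_, rfl⟩
      rw [Fintype.mem_piFinset]
      intro i
      rw [Finset.mem_Icc]
      exact hc i
    calc B.card ≤ _ := Finset.card_le_card hsub
      _ ≤ (Fintype.piFinset fun i => Finset.Icc (N i + 1) (N i + (H i : ℤ))).card :=
          Finset.card_image_le
      _ = ∏ i, (Finset.Icc (N i + 1) (N i + (H i : ℤ))).card := Fintype.card_piFinset _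
      _ = ∏ i, H i := by
          apply Finset.prod_congr rfl
          intro i _
          rw [Int.card_Icc]
          omega
  rw [hE]
  have hsumZ : ∑ z ∈ Zf, (f0 ω H z) ^ 2 = ∑ z ∈ Zf, (f0set z).card * (f0set z).card := by
    apply Finset.sum_congr rfl
    intro z _
    rw [hf0, sq]
  rw [hsumZ]
  set Sz := ∑ z ∈ Zf, (f0set z).card * (f0set z).card with hSzdef
  have hQ1split : Q1.card = ∑ z ∈ offz, h z * h z + h 0 * h 0 := by
    rw [hQ1card, ← Finset.sum_eq_sum_sdiff_singleton_add (Finset.mem_univ (0:F))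
      (fun z => h z * h z)]
  by_cases h0B : (0:F) ∈ boxSet ω N H
  · -- zero is in the box
    have h0B' : (0:F) ∈ B := (hmemB 0).mpr h0B
    have hkB : B.card = (B.erase 0).card + 1 := by
      have h1 : (B.erase 0).card = B.card - 1 := Finset.card_erase_of_mem h0B'
      have h2 : 1 ≤ B.card := Finset.card_pos.mpr ⟨0, h0B'⟩
      omega
    set k := (B.erase 0).card with hkdef
    have hBsub : ∀ x ∈ B, x ∈ B0 := by
      intro x hx
      rw [hmemB] at hx
      rw [hmemB0]
      have hd := diff_mem_symBox ω hx h0B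
      simpa using hd
    -- h z + 1 ≤ f0 z
    have hle2 : ∀ z : F, h z + 1 ≤ (f0set z).card := by
      intro z
      have hsub : insert ((0:F), (0:F)) (hset z) ⊆ f0set z := by
        intro q hq
        rcases Finset.mem_insert.mp hq with rfl | hq
        · simp only [f0setdef, Finset.mem_filter, Finset.mem_product]
          exact ⟨⟨(hmemB0 _).mpr (zero_mem_symBox ω H),
            (hmemB0 _).mpr (zero_mem_symBox ω H)⟩, by simp⟩
        · simp only [hsetdef, Finset.mem_filter, Finset.mem_product] at hq
          simp only [f0setdef, Finset.mem_filter, Finset.mem_product]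
          exact ⟨⟨hBsub _ hq.1.1, hBsub _ hq.1.2⟩, hq.2.2⟩
      have hnot : ((0:F), (0:F)) ∉ hset z := by
        simp [hsetdef]
      calc h z + 1 = (insert ((0:F), (0:F)) (hset z)).card := by
            rw [Finset.card_insert_of_notMem hnot, hdef]
        _ ≤ (f0set z).card := Finset.card_le_card hsub
    -- z ∈ Zf whenever z ≠ 0 and h z ≥ 1
    have hZmem1 : ∀ z : F, z ≠ 0 → 1 ≤ h z → z ∈ Zf := by
      intro z hz0 hz
      rw [hdef] at hz
      obtain ⟨q, hq⟩ := Finset.card_pos.mp hz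
      simp only [hsetdef, Finset.mem_filter, Finset.mem_product] at hq
      simp only [hZdef, Finset.mem_filter, Finset.mem_univ, true_and]
      refine ⟨q.1, q.2, (hmemB0 _).mp (hBsub _ hq.1.1), (hmemB0 _).mp (hBsub _ hq.1.2),
        hq.2.1, ?_, hq.2.2⟩
      rw [← hq.2.2]
      exact mul_ne_zero hq.2.1 hz0
    -- key sum inequality
    have key : ∑ z ∈ offz, (h z * h z + 2 * h z) ≤ Sz := by
      set S := offz.filter (fun z => h z ≠ 0) with hSdef
      have e1 : ∑ z ∈ offz, (h z * h z + 2 * h z) = ∑ z ∈ S, (h z * h z + 2 * h z) := by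
        apply (Finset.sum_subset (Finset.filter_subset _ _) ?_).symm
        intro z hzo hz
        have h0 : h z = 0 := by
          by_contra hne
          exact hz (Finset.mem_filter.mpr ⟨hzo, hne⟩)
        simp [h0]
      rw [e1]
      have e2 : ∑ z ∈ S, (h z * h z + 2 * h z) ≤
          ∑ z ∈ S, (f0set z).card * (f0set z).card := by
        apply Finset.sum_le_sum
        intro z _
        have hf := hle2 z
        calc h z * h z + 2 * h z ≤ h z * h z + 2 * h z + 1 := Nat.le_succ _
          _ = (h z + 1) * (h z + 1) := by ring
          _ ≤ (f0set z).card * (f0set z).card := Nat.mul_le_mul hf hf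
      have e3 : S ⊆ Zf := by
        intro z hz
        simp only [hSdef, Finset.mem_filter] at hz
        have hz0 : z ≠ 0 := by
          have h1 := hz.1
          simp only [hoffz, Finset.mem_sdiff, Finset.mem_univ, Finset.mem_singleton,
            true_and] at h1
          exact h1
        exact hZmem1 z hz0 (Nat.one_le_iff_ne_zero.mpr hz.2)
      exact le_trans e2 (Finset.sum_le_sum_of_subset e3)
    -- bounds on the degenerate parts
    set R := (B ×ˢ B).filter (fun q : F × F => q.1 * q.2 = 0) with hRdef
    have hR : R.card ≤ 2 * k + 1 := by
      have hsub : R ⊆ insert ((0:F), (0:F)) ((({0} : Finset F) ×ˢ B.erase 0) ∪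
          (B.erase 0 ×ˢ ({0} : Finset F))) := by
        rintro ⟨a, b⟩ hq
        simp only [hRdef, Finset.mem_filter, Finset.mem_product] at hq
        obtain ⟨⟨ha, hb⟩, hab⟩ := hq
        rcases mul_eq_zero.mp hab with rfl | rfl
        · by_cases hb0 : b = 0
          · subst hb0; exact Finset.mem_insert_self _ _
          · apply Finset.mem_insert_of_mem
            apply Finset.mem_union_left
            simp only [Finset.mem_product, Finset.mem_singleton, Finset.mem_erase]
            exact ⟨trivial, hb0, hb⟩
        · by_cases ha0 : a = 0
          · subst ha0; exact Finset.mem_insert_self _ _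
          · apply Finset.mem_insert_of_mem
            apply Finset.mem_union_right
            simp only [Finset.mem_product, Finset.mem_singleton, Finset.mem_erase]
            exact ⟨⟨ha0, ha⟩, trivial⟩
      calc R.card ≤ _ := Finset.card_le_card hsub
        _ ≤ ((({0} : Finset F) ×ˢ B.erase 0) ∪
            (B.erase 0 ×ˢ ({0} : Finset F))).card + 1 := Finset.card_insert_le _ _
        _ ≤ ((({0} : Finset F) ×ˢ B.erase 0).card +
            (B.erase 0 ×ˢ ({0} : Finset F)).card) + 1 :=
            Nat.add_le_add_right (Finset.card_union_le _ _) _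
        _ = 2 * k + 1 := by
            rw [Finset.card_product, Finset.card_product, Finset.card_singleton]
            ring
    have hQ2b : Q2.card ≤ B.card * R.card := by
      rw [← Finset.card_product]
      apply Finset.card_le_card_of_injOn (fun q => (q.2.1, (q.2.2.1, q.2.2.2)))
      · intro q hq
        simp only [hQ2def, hQdef, Finset.mem_coe, Finset.mem_filter, Finset.mem_univ,
          true_and] at hq
        obtain ⟨⟨ha, hb, hc, hd, he⟩, ha0⟩ := hq
        simp only [Finset.mem_coe, Finset.mem_product, hRdef, Finset.mem_filter]
        refine ⟨hb, ⟨hc, hd⟩, ?_⟩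
        rw [← he, ha0, zero_mul]
      · intro q hq q' hq' he
        simp only [hQ2def, hQdef, Finset.mem_coe, Finset.mem_filter] at hq hq'
        simp only [Prod.mk.injEq] at he
        exact Prod.ext (hq.2.trans hq'.2.symm)
          (Prod.ext he.1 (Prod.ext he.2.1 he.2.2))
    have hQ3b : Q3.card ≤ B.card * B.card := by
      rw [← Finset.card_product]
      apply Finset.card_le_card_of_injOn (fun q => (q.1, q.2.2.1))
      · intro q hq
        simp only [hQ3def, hQdef, Finset.mem_coe, Finset.mem_filter, Finset.mem_univ,
          true_and] at hq
        exact Finset.mem_product.mpr ⟨hq.1.1, hq.1.2.2.1⟩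
      · intro q hq q' hq' he
        simp only [hQ3def, hQdef, Finset.mem_coe, Finset.mem_filter, Finset.mem_univ,
          true_and] at hq hq'
        simp only [Prod.mk.injEq] at he
        obtain ⟨⟨ha, hb, hc, hd, heq⟩, ha0, hd0⟩ := hq
        obtain ⟨⟨ha', hb', hc', hd', heq'⟩, ha0', hd0'⟩ := hq'
        have hbz : q.2.1 = 0 := by
          have h1 : q.1 * q.2.1 = 0 := by rw [heq, hd0, mul_zero]
          rcases mul_eq_zero.mp h1 with h | h
          · exact absurd h ha0
          · exact h
        have hbz' : q'.2.1 = 0 := by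
          have h1 : q'.1 * q'.2.1 = 0 := by rw [heq', hd0', mul_zero]
          rcases mul_eq_zero.mp h1 with h | h
          · exact absurd h ha0'
          · exact h
        exact Prod.ext he.1 (Prod.ext (hbz.trans hbz'.symm)
          (Prod.ext he.2 (hd0.trans hd0'.symm)))
    have hh0 : h 0 ≤ k := by
      rw [hdef]
      have hsub : hset 0 ⊆ (B.erase 0) ×ˢ ({0} : Finset F) := by
        rintro ⟨a, c⟩ hq
        simp only [hsetdef, Finset.mem_filter, Finset.mem_product] at hq
        simp only [Finset.mem_product, Finset.mem_erase, Finset.mem_singleton]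
        exact ⟨⟨hq.2.1, hq.1.1⟩, by rw [← hq.2.2, mul_zero]⟩
      calc (hset 0).card ≤ _ := Finset.card_le_card hsub
        _ = k := by rw [Finset.card_product, Finset.card_singleton, mul_one]
    -- numeric assembly
    have hgain : (∑ z ∈ offz, h z * h z) + 2 * (k * k) =
        ∑ z ∈ offz, (h z * h z + 2 * h z) := by
      rw [Finset.sum_add_distrib, ← Finset.mul_sum, hsumoff]
    have A3 : (∑ z ∈ offz, h z * h z) + 2 * (k * k) ≤ Sz := hgain.trans_le key
    have A7 : k + 1 ≤ ∏ i, H i := by omega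
    have A7' : (k + 1) * (k + 1) ≤ (∏ i, H i) * (∏ i, H i) := Nat.mul_le_mul A7 A7
    have A6' : h 0 * h 0 ≤ k * k := Nat.mul_le_mul hh0 hh0
    have A4 : Q2.card ≤ (k + 1) * (2 * k + 1) := by
      calc Q2.card ≤ B.card * R.card := hQ2b
        _ ≤ (k + 1) * (2 * k + 1) := by
            rw [hkB]
            exact Nat.mul_le_mul_left _ hR
    have A5 : Q3.card ≤ (k + 1) * (k + 1) := by
      calc Q3.card ≤ B.card * B.card := hQ3b
        _ = (k + 1) * (k + 1) := by rw [hkB]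
    rw [hQ1split] at hsplit
    have A4' : Q2.card ≤ 2 * (k * k) + 3 * k + 1 :=
      A4.trans (le_of_eq (by ring))
    have A5' : Q3.card ≤ k * k + 2 * k + 1 :=
      A5.trans (le_of_eq (by ring))
    have A7'' : k * k + 2 * k + 1 ≤ (∏ i, H i) * (∏ i, H i) :=
      le_trans (le_of_eq (by ring)) A7'
    have hP2 : 3 * (∏ i, H i) ^ 2 = 3 * ((∏ i, H i) * (∏ i, H i)) := by ring
    rw [hP2]
    generalize (∏ i, H i) * (∏ i, H i) = PP at A7'' ⊢
    generalize h 0 * h 0 = y at A6' hsplit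
    generalize k * k = kk at A3 A6' A4' A5' A7''
    omega
  · -- zero is not in the box
    have hQ2e : Q2.card = 0 := by
      rw [Finset.card_eq_zero, hQ2def, Finset.filter_eq_empty_iff]
      intro q hq
      simp only [hQdef, Finset.mem_filter, Finset.mem_univ, true_and, hmemB] at hq
      intro h1
      rw [h1] at hq
      exact h0B hq.1
    have hQ3e : Q3.card = 0 := by
      rw [Finset.card_eq_zero, hQ3def, Finset.filter_eq_empty_iff]
      intro q hq
      simp only [hQdef, Finset.mem_filter, Finset.mem_univ, true_and, hmemB] at hq
      rintro ⟨-, h2⟩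
      rw [h2] at hq
      exact h0B hq.2.2.2.1
    have hh0 : h 0 = 0 := by
      rw [hdef, Finset.card_eq_zero, hsetdef, Finset.filter_eq_empty_iff]
      rintro ⟨a, c⟩ hq
      simp only [Finset.mem_product, hmemB] at hq
      rintro ⟨-, h2⟩
      rw [mul_zero] at h2
      dsimp only at h2
      rw [← h2] at hq
      exact h0B hq.2
    have key2 : ∑ z ∈ offz, h z * h z ≤ B.card * B.card + Sz := by
      rw [← Finset.sum_filter_add_sum_filter_not offz (fun z => 2 ≤ h z)
        (fun z => h z * h z)]
      have e1 : ∑ z ∈ offz.filter (fun z => 2 ≤ h z), h z * h z ≤ Sz := by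
        calc ∑ z ∈ offz.filter (fun z => 2 ≤ h z), h z * h z
            ≤ ∑ z ∈ offz.filter (fun z => 2 ≤ h z),
              (f0set z).card * (f0set z).card := by
              apply Finset.sum_le_sum
              intro z hz
              have h2 := (Finset.mem_filter.mp hz).2
              have h3 := hle1 z (le_trans one_le_two h2)
              exact Nat.mul_le_mul h3 h3
          _ ≤ Sz := by
              apply Finset.sum_le_sum_of_subset
              intro z hz
              rw [Finset.mem_filter] at hz
              have hz0 : z ≠ 0 := by
                have h1 := hz.1
                simp only [hoffz, Finset.mem_sdiff, Finset.mem_univ, Finset.mem_singleton,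
                  true_and] at h1
                exact h1
              exact hZmem z hz0 hz.2
      have e2 : ∑ z ∈ offz.filter (fun z => ¬ 2 ≤ h z), h z * h z ≤
          B.card * B.card := by
        calc ∑ z ∈ offz.filter (fun z => ¬ 2 ≤ h z), h z * h z
            ≤ ∑ z ∈ offz.filter (fun z => ¬ 2 ≤ h z), h z := by
              apply Finset.sum_le_sum
              intro z hz
              have h1 : h z ≤ 1 := by
                have h2 := (Finset.mem_filter.mp hz).2
                omega
              calc h z * h z ≤ 1 * h z := Nat.mul_le_mul_right _ h1
                _ = h z := one_mul _
          _ ≤ ∑ z ∈ offz, h z := Finset.sum_le_sum_of_subset (Finset.filter_subset _ _)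
          _ = (B.erase 0).card * (B.erase 0).card := hsumoff
          _ ≤ B.card * B.card :=
              Nat.mul_le_mul (Finset.card_le_card (Finset.erase_subset _ _))
                (Finset.card_le_card (Finset.erase_subset _ _))
      omega
    have hQ1b : Q1.card = ∑ z ∈ offz, h z * h z := by
      rw [hQ1split, hh0]
      simp
    have hBP : B.card * B.card ≤ (∏ i, H i) * (∏ i, H i) := Nat.mul_le_mul hBcard hBcard
    calc Q.card ≤ Q1.card + Q2.card + Q3.card := hsplit
      _ = ∑ z ∈ offz, h z * h z := by rw [hQ1b, hQ2e, hQ3e]; omega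
      _ ≤ B.card * B.card + Sz := key2
      _ ≤ 3 * (∏ i, H i) ^ 2 + Sz := by
          refine Nat.add_le_add_right ?_ _
          calc B.card * B.card ≤ (∏ i, H i) * (∏ i, H i) := hBP
            _ = (∏ i, H i) ^ 2 := (sq _).symm
            _ ≤ 3 * (∏ i, H i) ^ 2 := Nat.le_mul_of_pos_left _ (by norm_num)
end

section
/- For every z ∈ 𝔽_{p^n}, the number of solutions (x,y) ∈ B × B to xz = y is at most the number of solutions (x,y) ∈ B_0 × B_0 to xz = y; that is, f(z) ≤ f_0(z), where f(z) = #{(x,y) ∈ B² : xz = y} and f_0(z) = #{(x,y) ∈ B_0² : xz = y}. -/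
/-- for every `z ∈ 𝔽_{p^n}`,
`f(z) = #{(x,y) ∈ B² : xz = y} ≤ f₀(z) = #{(x,y) ∈ B₀² : xz = y}`. -/
theorem stmt_14 (n : ℕ) (hn : 2 ≤ n) (p : ℕ) (hp : p.Prime)
    (F : Type) [Field F] [Fintype F] (hF : Fintype.card F = p ^ n)
    (ω : Fin n → F)
    (hω : Function.Bijective (fun c : Fin n → ZMod p => ∑ i, ((c i).val : F) * ω i))
    (N : Fin n → ℤ) (H : Fin n → ℕ) (hH1 : ∀ i, 1 ≤ H i) (hHp : ∀ i, H i ≤ p)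
    (z : F) :
    Set.ncard {q : F × F |
        q.1 ∈ boxSet ω N H ∧ q.2 ∈ boxSet ω N H ∧ q.1 * z = q.2} ≤
      Set.ncard {q : F × F |
        q.1 ∈ symBoxSet ω H ∧ q.2 ∈ symBoxSet ω H ∧ q.1 * z = q.2} := by
  rcases Set.eq_empty_or_nonempty {q : F × F |
      q.1 ∈ boxSet ω N H ∧ q.2 ∈ boxSet ω N H ∧ q.1 * z = q.2} with h | ⟨⟨x₀, y₀⟩, h₀⟩
  · simp [h]
  · obtain ⟨⟨c₀, hc₀, hx₀⟩, ⟨d₀, hd₀, hy₀⟩, hxy₀⟩ := h₀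
    dsimp only at hx₀ hy₀ hxy₀
    apply Set.ncard_le_ncard_of_injOn (fun q => (q.1 - x₀, q.2 - y₀))
    · rintro ⟨x, y⟩ ⟨⟨c, hc, hx⟩, ⟨d, hd, hy⟩, hxy⟩
      dsimp only at hx hy hxy ⊢
      refine ⟨⟨fun i => c i - c₀ i, fun i => ?_, ?_⟩,
        ⟨fun i => d i - d₀ i, fun i => ?_, ?_⟩, ?_⟩
      · show |c i - c₀ i| ≤ (H i : ℤ)
        have h1 := hc i; have h2 := hc₀ i
        rw [abs_le]; omega
      · rw [hx, hx₀, ← Finset.sum_sub_distrib]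
        dsimp only
        refine Finset.sum_congr rfl fun i _ => ?_
        push_cast; ring
      · show |d i - d₀ i| ≤ (H i : ℤ)
        have h1 := hd i; have h2 := hd₀ i
        rw [abs_le]; omega
      · rw [hy, hy₀, ← Finset.sum_sub_distrib]
        dsimp only
        refine Finset.sum_congr rfl fun i _ => ?_
        push_cast; ring
      · rw [sub_mul, hxy, hxy₀]
    · intro a _ b _ hab
      have h1 := congrArg Prod.fst hab
      have h2 := congrArg Prod.snd hab
      simp only at h1 h2
      ext
      · exact sub_left_injective h1
      · exact sub_left_injective h2
end

section
/- Let n ≥ 2, suppose 1 ≤ H_1 ≤ H_2 ≤ ⋯ ≤ H_n < √(p/2), and let z ∈ 𝔽_{p^n} with z ∉ 𝔽_p. Then the first successive minimum of the box D = {(x_1,…,x_n,y_1,…,y_n) ∈ ℝ^{2n} : |x_i| ≤ H_i, |y_i| ≤ H_i for 1 ≤ i ≤ n} with respect to the lattice Λ_z satisfies λ_1(D, Λ_z) ≥ H_{n−1}^{−1}. -/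
/-- The lattice `Λ_z = {(x,y) ∈ ℤ^{2n} : z·∑ xᵢωᵢ = ∑ yᵢωᵢ in 𝔽_{p^n}}`, as a set. -/
def lambdaSet (n : ℕ) (F : Type) [Field F] (ω : Fin n → F) (z : F) :
    Set ((Fin n → ℤ) × (Fin n → ℤ)) :=
  {v | z * ∑ i, (v.1 i : F) * ω i = ∑ i, (v.2 i : F) * ω i}

/-- The first successive minimum of the box
`D = {(x,y) ∈ ℝ^{2n} : |xᵢ| ≤ Hᵢ, |yᵢ| ≤ Hᵢ}` with respect to the lattice `Λ_z`:
the infimum of those `t > 0` for which `t·D` contains a nonzero point of `Λ_z`. -/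
noncomputable def firstMinBox (n : ℕ) (F : Type) [Field F] (ω : Fin n → F)
    (H : Fin n → ℕ) (z : F) : ℝ :=
  sInf {t : ℝ | 0 < t ∧ ∃ v : (Fin n → ℤ) × (Fin n → ℤ), v ≠ 0 ∧
    v ∈ lambdaSet n F ω z ∧
    (∀ i, |(v.1 i : ℝ)| ≤ t * H i) ∧ (∀ i, |(v.2 i : ℝ)| ≤ t * H i)}

/-- for `n ≥ 2`, `1 ≤ H₁ ≤ ⋯ ≤ Hₙ < √(p/2)` and `z ∉ 𝔽_p`
(the prime subfield, i.e. the range of the natural-number cast), the first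
successive minimum of the box `D` with respect to `Λ_z` is at least `H_{n−1}⁻¹`. -/
theorem stmt_16 (n : ℕ) (hn : 2 ≤ n) (p : ℕ) (hp : p.Prime)
    (F : Type) [Field F] [Fintype F] (hF : Fintype.card F = p ^ n)
    (ω : Fin n → F)
    (hω : Function.Bijective (fun c : Fin n → ZMod p => ∑ i, ((c i).val : F) * ω i))
    (H : Fin n → ℕ) (hH1 : ∀ i, 1 ≤ H i) (hmono : Monotone H)
    (hHp : (H ⟨n - 1, by omega⟩ : ℝ) < Real.sqrt ((p : ℝ) / 2))
    (z : F) (hz : z ∉ Set.range (Nat.cast : ℕ → F)) :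
    ((H ⟨n - 2, by omega⟩ : ℝ))⁻¹ ≤ firstMinBox n F ω H z := by
  classical
  haveI : Fact p.Prime := ⟨hp⟩
  have hp1 : 1 < p := hp.one_lt
  -- characteristic of F is p
  have hchar : CharP F p := by
    haveI h1 : CharP F (ringChar F) := ringChar.charP F
    obtain ⟨m, hq, hcard⟩ := FiniteField.card F (ringChar F)
    have hpow : p ^ n = (ringChar F) ^ (m : ℕ) := by rw [← hF, hcard]
    have hdvd : p ∣ (ringChar F) ^ (m : ℕ) := by
      rw [← hpow]; exact dvd_pow_self p (by omega)
    have := (Nat.prime_dvd_prime_iff_eq hp hq).mp (hp.dvd_of_dvd_pow hdvd)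
    rwa [this]
  let m1 : Fin n := ⟨n - 1, by omega⟩
  let m2 : Fin n := ⟨n - 2, by omega⟩
  let φ : ZMod p →+* F := ZMod.castHom dvd_rfl F
  have hφ : Function.Injective φ := φ.injective
  have hcast : ∀ a : ℤ, (a : F) = φ ((a : ZMod p)) := fun a => (map_intCast φ a).symm
  -- ω m1 ≠ 0
  have hω1 : ω m1 ≠ 0 := by
    intro h0
    have heq : (fun c : Fin n → ZMod p => ∑ i, ((c i).val : F) * ω i)
        (Pi.single m1 (1 : ZMod p)) =
        (fun c : Fin n → ZMod p => ∑ i, ((c i).val : F) * ω i) 0 := by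
      simp only [Pi.zero_apply, ZMod.val_zero, Nat.cast_zero, zero_mul,
        Finset.sum_const_zero]
      rw [Finset.sum_eq_single m1]
      · simp [ZMod.val_one, h0]
      · intro i _ hne; simp [Pi.single_apply, hne]
      · intro h; exact absurd (Finset.mem_univ m1) h
    have := hω.injective heq
    have h1 : (Pi.single m1 (1 : ZMod p) : Fin n → ZMod p) m1 = (0 : Fin n → ZMod p) m1 := by rw [this]
    simp at h1
  rw [firstMinBox]
  apply le_csInf
  · -- nonempty
    refine ⟨(p : ℝ), by positivity, ⟨Pi.single ⟨0, by omega⟩ (p : ℤ), 0⟩, ?_, ?_, ?_, ?_⟩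
    · intro h
      have := congrFun (congrArg Prod.fst h) ⟨0, by omega⟩
      simp at this
      omega
    · show z * ∑ i, (((Pi.single (⟨0, by omega⟩ : Fin n) (p : ℤ) : Fin n → ℤ) i : ℤ) : F) * ω i
          = ∑ i, (((0 : Fin n → ℤ) i : ℤ) : F) * ω i
      have : ∑ i, (((Pi.single (⟨0, by omega⟩ : Fin n) (p : ℤ) : Fin n → ℤ) i : ℤ) : F) * ω i = 0 := by
        rw [Finset.sum_eq_single (⟨0, by omega⟩ : Fin n)]
        · simp
        · intro i _ hne; simp [Pi.single_apply, hne]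
        · intro h; exact absurd (Finset.mem_univ _) h
      simp [this]
    · intro i
      rcases eq_or_ne i (⟨0, by omega⟩ : Fin n) with h | h
      · subst h
        simp only [Pi.single_eq_same]
        rw [abs_of_nonneg (by positivity)]
        push_cast
        nlinarith [hH1 (⟨0, by omega⟩ : Fin n), (by positivity : (0:ℝ) < (p:ℝ)),
          (by exact_mod_cast hH1 (⟨0, by omega⟩ : Fin n) : (1:ℝ) ≤ (H (⟨0, by omega⟩ : Fin n) : ℝ))]
      · simp [Pi.single_apply, h]
        positivity
    · intro i
      simp only [Prod.snd]
      norm_num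
      positivity
  · -- lower bound
    rintro t ⟨htpos, v, hv0, hvmem, hx, hy⟩
    by_contra hcon
    push_neg at hcon
    have hHm2pos : (0:ℝ) < (H m2 : ℝ) := by exact_mod_cast hH1 m2
    have ht1 : t < (H m2 : ℝ)⁻¹ := hcon
    -- coordinates other than m1 vanish
    have hzero : ∀ (w : Fin n → ℤ), (∀ i, |(w i : ℝ)| ≤ t * H i) →
        ∀ i, i ≠ m1 → w i = 0 := by
      intro w hw i hne
      have hile : H i ≤ H m2 := by
        apply hmono
        have : (i : ℕ) ≠ n - 1 := fun h => hne (Fin.ext h)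
        have hlt : (i : ℕ) < n := i.isLt
        show (i : ℕ) ≤ n - 2
        omega
      have h1 : |(w i : ℝ)| < 1 := by
        calc |(w i : ℝ)| ≤ t * H i := hw i
          _ ≤ t * H m2 := by
              apply mul_le_mul_of_nonneg_left _ (le_of_lt htpos)
              exact_mod_cast hile
          _ < (H m2 : ℝ)⁻¹ * H m2 := by
              apply mul_lt_mul_of_pos_right ht1 hHm2pos
          _ = 1 := inv_mul_cancel₀ (ne_of_gt hHm2pos)
      have h2 : |w i| < 1 := by exact_mod_cast (by push_cast at h1 ⊢; exact h1 : |((w i : ℤ) : ℝ)| < 1)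
      rcases abs_lt.mp h2 with ⟨ha, hb⟩
      omega
    have hzero1 := hzero v.1 hx
    have hzero2 := hzero v.2 hy
    -- bound on last coordinate
    have hHm1p : (H m1 : ℝ) < p := by
      have h2 : Real.sqrt ((p:ℝ)/2) ≤ Real.sqrt p := by
        apply Real.sqrt_le_sqrt; linarith [(by positivity : (0:ℝ) ≤ (p:ℝ))]
      have h3 : Real.sqrt p < p := by
        rw [Real.sqrt_lt' (by positivity)]
        have : (1:ℝ) < p := by exact_mod_cast hp1
        nlinarith
      calc (H m1 : ℝ) < Real.sqrt ((p:ℝ)/2) := hHp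
        _ ≤ Real.sqrt p := h2
        _ < p := h3
    have hlast : ∀ (w : Fin n → ℤ), (∀ i, |(w i : ℝ)| ≤ t * H i) → |w m1| < (p : ℤ) := by
      intro w hw
      have ht1' : t < 1 := by
        calc t < (H m2 : ℝ)⁻¹ := ht1
          _ ≤ 1 := by
            rw [inv_le_one_iff₀]; right; exact_mod_cast hH1 m2
      have : |(w m1 : ℝ)| < p := by
        calc |(w m1 : ℝ)| ≤ t * H m1 := hw m1
          _ < 1 * H m1 := by
              apply mul_lt_mul_of_pos_right ht1'
              exact_mod_cast hH1 m1
          _ = H m1 := one_mul _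
          _ < p := hHm1p
      exact_mod_cast this
    -- reduce sums
    have hsum1 : ∑ i, (v.1 i : F) * ω i = (v.1 m1 : F) * ω m1 := by
      rw [Finset.sum_eq_single m1]
      · intro i _ hne; rw [hzero1 i hne]; simp
      · intro h; exact absurd (Finset.mem_univ _) h
    have hsum2 : ∑ i, (v.2 i : F) * ω i = (v.2 m1 : F) * ω m1 := by
      rw [Finset.sum_eq_single m1]
      · intro i _ hne; rw [hzero2 i hne]; simp
      · intro h; exact absurd (Finset.mem_univ _) h
    have heq : z * ((v.1 m1 : F) * ω m1) = (v.2 m1 : F) * ω m1 := by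
      rw [← hsum1, ← hsum2]; exact hvmem
    rcases eq_or_ne ((v.1 m1 : ZMod p)) 0 with hX | hX
    · -- x ≡ 0 mod p, so x = 0, then y = 0, so v = 0
      have hdvd : (p : ℤ) ∣ v.1 m1 := (ZMod.intCast_zmod_eq_zero_iff_dvd _ p).mp hX
      have hx0 : v.1 m1 = 0 := by
        have := hlast v.1 hx
        obtain ⟨k, hk⟩ := hdvd
        have hpk : (0:ℤ) < p := by exact_mod_cast hp.pos
        rw [hk] at this ⊢
        rw [abs_mul, abs_of_pos hpk] at this
        have hk1 : |k| < 1 := by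
          by_contra hk1
          push_neg at hk1
          nlinarith
        rcases abs_lt.mp hk1 with ⟨ha, hb⟩
        have : k = 0 := by omega
        simp [this]
      have hy0F : (v.2 m1 : F) = 0 := by
        have := heq
        rw [hx0] at this
        simp at this
        rcases this with h | h
        · exact h
        · exact absurd h hω1
      have hy0 : v.2 m1 = 0 := by
        have hzm : (v.2 m1 : ZMod p) = 0 := by
          apply hφ
          rw [← hcast, hy0F, map_zero]
        have hdvd2 : (p : ℤ) ∣ v.2 m1 := (ZMod.intCast_zmod_eq_zero_iff_dvd _ p).mp hzm
        have := hlast v.2 hy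
        obtain ⟨k, hk⟩ := hdvd2
        have hpk : (0:ℤ) < p := by exact_mod_cast hp.pos
        rw [hk] at this ⊢
        rw [abs_mul, abs_of_pos hpk] at this
        have hk1 : |k| < 1 := by
          by_contra hk1
          push_neg at hk1
          nlinarith
        rcases abs_lt.mp hk1 with ⟨ha, hb⟩
        have : k = 0 := by omega
        simp [this]
      apply hv0
      ext i
      · rcases eq_or_ne i m1 with h | h
        · rw [h]; exact hx0
        · exact hzero1 i h
      · rcases eq_or_ne i m1 with h | h
        · rw [h]; exact hy0
        · exact hzero2 i h
    · -- x ≢ 0 mod p, so z ∈ F_p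
      have hxF : (v.1 m1 : F) ≠ 0 := by
        rw [hcast]
        intro h
        exact hX (hφ (by rw [h, map_zero]))
      have hzval : z = (v.2 m1 : F) * (v.1 m1 : F)⁻¹ := by
        have h1 : z * (v.1 m1 : F) * ω m1 = (v.2 m1 : F) * ω m1 := by
          rw [mul_assoc]; exact heq
        have h2 : z * (v.1 m1 : F) = (v.2 m1 : F) := mul_right_cancel₀ hω1 h1
        field_simp [← h2]
        exact h2
      apply hz
      refine ⟨((v.2 m1 : ZMod p) * (v.1 m1 : ZMod p)⁻¹).val, ?_⟩
      have : ((((v.2 m1 : ZMod p) * (v.1 m1 : ZMod p)⁻¹).val : ℕ) : F)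
          = φ ((v.2 m1 : ZMod p) * (v.1 m1 : ZMod p)⁻¹) := by
        rw [ZMod.natCast_val, ZMod.castHom_apply]
      rw [this, map_mul, map_inv₀, ← hcast, ← hcast, hzval]
end

section
/- Let z, z' ∈ 𝔽_{p^n} and let u = (x_1,…,x_n,y_1,…,y_n) ∈ ℤ^{2n} be nonzero with |x_i| < p and |y_i| < p for all i. If u ∈ Λ_z ∩ Λ_{z'} and z, z' ∉ 𝔽_p, then z = z'. (In particular, the minimal lattice vector associated to z ∈ Z∖𝔽_p uniquely determines z.) -/
lemma charP_aux (p n : ℕ) (hp : p.Prime) (F : Type) [Field F] [Fintype F]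
    (hF : Fintype.card F = p ^ n) : (p : F) = 0 := by
  have h : ((Fintype.card F : ℕ) : F) = 0 := FiniteField.cast_card_eq_zero F
  rw [hF] at h
  push_cast at h
  exact pow_eq_zero_iff (by
    rintro rfl
    simp [pow_zero] at hF
    have := Fintype.one_lt_card (α := F)
    omega) |>.mp h

lemma sum_zero_aux (n p : ℕ) (hp : p.Prime) (F : Type) [Field F] [Fintype F]
    (hpF : (p : F) = 0)
    (ω : Fin n → F)
    (hω : Function.Bijective (fun c : Fin n → ZMod p => ∑ i, ((c i).val : F) * ω i))
    (v : Fin n → ℤ) (hv : ∀ i, |v i| < (p : ℤ))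
    (h : ∑ i, (v i : F) * ω i = 0) : v = 0 := by
  haveI : NeZero p := ⟨hp.ne_zero⟩
  have key : ∀ i, (((v i : ZMod p).val : F)) = (v i : F) := by
    intro i
    have hdvd : (p : ℤ) ∣ (v i - ((v i : ZMod p).val : ℤ)) := by
      have : ((v i - ((v i : ZMod p).val : ℤ) : ℤ) : ZMod p) = 0 := by
        push_cast
        simp [ZMod.intCast_cast, ZMod.natCast_val, ZMod.intCast_zmod_cast]
      exact (ZMod.intCast_zmod_eq_zero_iff_dvd _ p).mp this
    obtain ⟨k, hk⟩ := hdvd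
    have : ((v i : ℤ) : F) - (((v i : ZMod p).val : ℤ) : F) = ((p : ℤ) : F) * (k : F) := by
      rw [← Int.cast_mul, ← hk]; push_cast; ring
    push_cast at this ⊢
    rw [hpF] at this
    linear_combination -this
  have hc : (fun c : Fin n → ZMod p => ∑ i, ((c i).val : F) * ω i)
      (fun i => (v i : ZMod p)) = (fun c : Fin n → ZMod p => ∑ i, ((c i).val : F) * ω i) 0 := by
    simp only [key, Pi.zero_apply, ZMod.val_zero, Nat.cast_zero, zero_mul,
      Finset.sum_const_zero, h]
  have h0 := hω.injective hc
  funext i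
  have : (v i : ZMod p) = 0 := congrFun h0 i
  have hdvd : (p : ℤ) ∣ v i := by
    exact_mod_cast (ZMod.intCast_zmod_eq_zero_iff_dvd _ p).mp this
  have := hv i
  simp only [Pi.zero_apply]
  rcases hdvd with ⟨k, hk⟩
  have hp' : (0:ℤ) < p := by exact_mod_cast hp.pos
  rcases lt_trichotomy k 0 with hk0 | hk0 | hk0
  · nlinarith [abs_lt.mp (hv i)]
  · simp [hk, hk0]
  · nlinarith [abs_lt.mp (hv i)]

/-- if a nonzero vector `u ∈ ℤ^{2n}` with all coordinates of absolute
value `< p` lies in `Λ_z ∩ Λ_{z'}` for `z, z' ∉ 𝔽_p` (the prime subfield, i.e. the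
range of the natural-number cast), then `z = z'`; the minimal lattice vector
associated to `z ∈ Z∖𝔽_p` uniquely determines `z`. -/
theorem stmt_17 (n : ℕ) (hn : 2 ≤ n) (p : ℕ) (hp : p.Prime)
    (F : Type) [Field F] [Fintype F] (hF : Fintype.card F = p ^ n)
    (ω : Fin n → F)
    (hω : Function.Bijective (fun c : Fin n → ZMod p => ∑ i, ((c i).val : F) * ω i))
    (z z' : F)
    (hz : z ∉ Set.range (Nat.cast : ℕ → F)) (hz' : z' ∉ Set.range (Nat.cast : ℕ → F))
    (u : (Fin n → ℤ) × (Fin n → ℤ)) (hu : u ≠ 0)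
    (hu1 : ∀ i, |u.1 i| < (p : ℤ)) (hu2 : ∀ i, |u.2 i| < (p : ℤ))
    (huz : u ∈ lambdaSet n F ω z) (huz' : u ∈ lambdaSet n F ω z') :
    z = z' := by
  have hpF : (p : F) = 0 := charP_aux p n hp F hF
  simp only [lambdaSet, Set.mem_setOf_eq] at huz huz'
  by_cases hX : ∑ i, (u.1 i : F) * ω i = 0
  · exfalso
    have h1 : u.1 = 0 := sum_zero_aux n p hp F hpF ω hω u.1 hu1 hX
    have hY : ∑ i, (u.2 i : F) * ω i = 0 := by rw [← huz, hX, mul_zero]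
    have h2 : u.2 = 0 := sum_zero_aux n p hp F hpF ω hω u.2 hu2 hY
    exact hu (Prod.ext h1 h2)
  · field_simp at *
    have : z * ∑ i, (u.1 i : F) * ω i = z' * ∑ i, (u.1 i : F) * ω i := huz.trans huz'.symm
    exact mul_right_cancel₀ hX this
end

section
/- Let z', z'' ∈ 𝔽_{p^n} with z' ≠ z''. Suppose u = (u_1/p, …, u_n/p, v_1/p, …, v_n/p) ∈ Λ*_{z'} ∩ Λ*_{z''}, where u_1,…,u_n,v_1,…,v_n are integers with |u_i| < p and |v_i| < p for all i. Then u_i = 0 and v_i = 0 for all 1 ≤ i ≤ n; in particular u = 0, so a nonzero dual vector of this form lies in Λ*_z for at most one z. -/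
/-- Membership of the vector `(u₁/p,…,uₙ/p,v₁/p,…,vₙ/p) ∈ ℝ^{2n}` in the polar dual
lattice `Λ*_z`: its pairing with every element of `Λ_z` is an integer. -/
def memDualLambda (n : ℕ) (F : Type) [Field F] (ω : Fin n → F) (z : F)
    (p : ℕ) (u v : Fin n → ℤ) : Prop :=
  ∀ w ∈ lambdaSet n F ω z,
    ∃ m : ℤ, (∑ i, (u i : ℝ) / p * (w.1 i : ℝ)) + ∑ i, (v i : ℝ) / p * (w.2 i : ℝ) = m

/-- if `z' ≠ z''` and `(u₁/p,…,uₙ/p,v₁/p,…,vₙ/p) ∈ Λ*_{z'} ∩ Λ*_{z''}`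
with all `|uᵢ| < p`, `|vᵢ| < p`, then all `uᵢ = 0` and `vᵢ = 0`; in particular a
nonzero dual vector of this form lies in `Λ*_z` for at most one `z`. -/
theorem stmt_18 (n : ℕ) (hn : 2 ≤ n) (p : ℕ) (hp : p.Prime)
    (F : Type) [Field F] [Fintype F] (hF : Fintype.card F = p ^ n)
    (ω : Fin n → F)
    (hω : Function.Bijective (fun c : Fin n → ZMod p => ∑ i, ((c i).val : F) * ω i))
    (z' z'' : F) (hzz : z' ≠ z'')
    (u v : Fin n → ℤ) (hu : ∀ i, |u i| < (p : ℤ)) (hv : ∀ i, |v i| < (p : ℤ))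
    (hd' : memDualLambda n F ω z' p u v) (hd'' : memDualLambda n F ω z'' p u v) :
    ∀ i, u i = 0 ∧ v i = 0 := by
  have hppos : 0 < p := hp.pos
  haveI : NeZero p := ⟨hppos.ne'⟩
  have hpR : (p:ℝ) ≠ 0 := by exact_mod_cast hppos.ne'
  -- characteristic: (p : F) = 0
  have h0F : (p : F) = 0 := by
    have h1 : ((p:F))^n = 0 := by
      have h := FiniteField.cast_card_eq_zero F
      rw [hF] at h
      push_cast at h
      exact h
    exact pow_eq_zero_iff (by omega : n ≠ 0) |>.mp h1
  have castF : ∀ a : ℤ, (p:ℤ) ∣ a → (a : F) = 0 := by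
    rintro a ⟨k, rfl⟩
    push_cast
    rw [h0F]; ring
  have castF' : ∀ a : ℤ, ((a : F)) = (((a : ZMod p).val : F)) := by
    intro a
    have hd : (p:ℤ) ∣ (a - ((a : ZMod p).val : ℤ)) := by
      have h2 : (((a - ((a:ZMod p).val:ℤ)) : ℤ) : ZMod p) = 0 := by
        push_cast
        rw [ZMod.natCast_val, ZMod.cast_id]
        ring
      exact (ZMod.intCast_zmod_eq_zero_iff_dvd _ p).mp h2
    have := castF _ hd
    push_cast at this
    linear_combination this
  -- congruence from equal sums
  have congrMod : ∀ c d : Fin n → ℤ,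
      (∑ i, (c i : F) * ω i) = (∑ i, (d i : F) * ω i) → ∀ i, (p:ℤ) ∣ (c i - d i) := by
    intro c d h i
    have hcd : (fun i => ((c i : ℤ) : ZMod p)) = (fun i => ((d i : ℤ) : ZMod p)) := by
      apply hω.injective
      show ∑ i, (((c i : ℤ) : ZMod p).val : F) * ω i = ∑ i, (((d i : ℤ) : ZMod p).val : F) * ω i
      calc ∑ i, (((c i : ℤ) : ZMod p).val : F) * ω i
          = ∑ i, (c i : F) * ω i := by
            refine Finset.sum_congr rfl fun i _ => ?_
            rw [castF' (c i)]
        _ = ∑ i, (d i : F) * ω i := h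
        _ = ∑ i, (((d i : ℤ) : ZMod p).val : F) * ω i := by
            refine Finset.sum_congr rfl fun i _ => ?_
            rw [castF' (d i)]
    have h3 : ((c i - d i : ℤ) : ZMod p) = 0 := by
      push_cast
      rw [congrFun hcd i]
      ring
    exact (ZMod.intCast_zmod_eq_zero_iff_dvd _ p).mp h3
  -- surjectivity with integer coefficients
  have surjF : ∀ t : F, ∃ c : Fin n → ℤ, (∑ i, (c i : F) * ω i) = t := by
    intro t
    obtain ⟨c', hc'⟩ := hω.surjective t
    refine ⟨fun i => ((c' i).val : ℤ), ?_⟩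
    simpa using hc'
  -- dual membership gives divisibility
  have dualDvd : ∀ (z : F), memDualLambda n F ω z p u v →
      ∀ w ∈ lambdaSet n F ω z, (p:ℤ) ∣ (∑ i, u i * w.1 i + ∑ i, v i * w.2 i) := by
    intro z hd w hw
    obtain ⟨m, hm⟩ := hd w hw
    simp only [div_mul_eq_mul_div, ← Finset.sum_div, ← add_div] at hm
    have h4 := (div_eq_iff hpR).mp hm
    refine ⟨m, ?_⟩
    exact_mod_cast h4.trans (mul_comm _ _)
  -- step 1 : v = 0
  have hv0 : ∀ j, v j = 0 := by
    intro j
    have hs : z' - z'' ≠ 0 := sub_ne_zero.mpr hzz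
    obtain ⟨x, hx⟩ := surjF ((z' - z'')⁻¹ * ω j)
    obtain ⟨y1, hy1⟩ := surjF (z' * ∑ i, (x i : F) * ω i)
    obtain ⟨y2, hy2⟩ := surjF (z'' * ∑ i, (x i : F) * ω i)
    have m1 : (x, y1) ∈ lambdaSet n F ω z' := hy1.symm
    have m2 : (x, y2) ∈ lambdaSet n F ω z'' := hy2.symm
    have d1 := dualDvd z' hd' _ m1
    have d2 := dualDvd z'' hd'' _ m2
    -- ∑ y1 ω = ∑ (y2 + δⱼ) ω
    have hdiff : (∑ i, (y1 i : F) * ω i)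
        = ∑ i, ((y2 i + if i = j then 1 else 0 : ℤ) : F) * ω i := by
      have hr : ∑ i, ((y2 i + if i = j then 1 else 0 : ℤ) : F) * ω i
          = (∑ i, (y2 i : F) * ω i) + ω j := by
        push_cast
        rw [Finset.sum_congr rfl (fun i _ => add_mul _ _ _), Finset.sum_add_distrib]
        congr 1
        simp
      rw [hr, hy1, hy2, hx]
      field_simp
      ring
    have hcong := congrMod _ _ hdiff
    have hd3 : (p:ℤ) ∣ ∑ i, v i * (y1 i - y2 i) := by
      have heq2 : ∑ i, v i * (y1 i - y2 i)
          = (∑ i, u i * x i + ∑ i, v i * y1 i) - (∑ i, u i * x i + ∑ i, v i * y2 i) := by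
        calc ∑ i, v i * (y1 i - y2 i)
            = ∑ i, (v i * y1 i - v i * y2 i) :=
              Finset.sum_congr rfl fun i _ => by ring
          _ = (∑ i, v i * y1 i) - ∑ i, v i * y2 i := Finset.sum_sub_distrib _ _
          _ = _ := by ring
      rw [heq2]
      exact dvd_sub d1 d2
    have hd4 : (p:ℤ) ∣ ∑ i, v i * ((y1 i - y2 i) - if i = j then 1 else 0) := by
      refine Finset.dvd_sum fun i _ => Dvd.dvd.mul_left ?_ _
      have := hcong i
      simpa [sub_sub] using this
    have hd5 : (p:ℤ) ∣ v j := by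
      have heq : v j = (∑ i, v i * (y1 i - y2 i))
          - ∑ i, v i * ((y1 i - y2 i) - if i = j then 1 else 0) := by
        rw [← Finset.sum_sub_distrib]
        have : ∀ i ∈ Finset.univ, v i * (y1 i - y2 i)
            - v i * ((y1 i - y2 i) - if i = j then 1 else 0)
            = v i * (if i = j then 1 else 0) := fun i _ => by ring
        rw [Finset.sum_congr rfl this]
        simp
      rw [heq]
      exact dvd_sub hd3 hd4
    exact Int.eq_zero_of_abs_lt_dvd hd5 (hv j)
  -- step 2 : u = 0
  have hu0 : ∀ j, u j = 0 := by
    intro j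
    set x : Fin n → ℤ := fun i => if i = j then 1 else 0 with hxdef
    obtain ⟨y1, hy1⟩ := surjF (z' * ∑ i, (x i : F) * ω i)
    have m1 : (x, y1) ∈ lambdaSet n F ω z' := hy1.symm
    have d1 := dualDvd z' hd' _ m1
    have hsum : (∑ i, u i * x i + ∑ i, v i * y1 i) = u j := by
      have h5 : ∑ i, v i * y1 i = 0 := by
        refine Finset.sum_eq_zero fun i _ => by rw [hv0 i]; ring
      rw [h5, add_zero, hxdef]
      simp
    rw [hsum] at d1
    exact Int.eq_zero_of_abs_lt_dvd d1 (hu j)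
  exact fun i => ⟨hu0 i, hv0 i⟩
end
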